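/- Let π be a prime number, n a positive even integer, and r an odd integer with r² ≡ 1 (mod πn); set k' = (r² − 1)/(πn). Then gcd(r + 1, πn) · gcd(r − 1, πn) = 2π · gcd(k'·(n/2), n). -/

import Mathlib

private lemma gcd_mul_of_coprime' {a b : ℤ} (m : ℤ) (h : IsCoprime a b) :
    Int.gcd (a * b) m = Int.gcd a m * Int.gcd b m := by
  have hc : Nat.Coprime a.natAbs b.natAbs := Int.isCoprime_iff_gcd_eq_one.mp h
  show Nat.gcd (a * b).natAbs m.natAbs = _
  rw [Int.natAbs_mul, Nat.gcd_comm, Nat.Coprime.gcd_mul _ hc, Nat.gcd_comm, Nat.gcd_comm m.natAbs]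
  rfl

theorem stmt7 (p n : ℕ) (hp : p.Prime) (hn : 0 < n) (hne : Even n) (r : ℤ) (hr : Odd r)
    (hrr : r ^ 2 ≡ 1 [ZMOD ((p : ℤ) * n)]) (k' : ℤ) (hk' : k' = (r ^ 2 - 1) / ((p : ℤ) * n)) :
    Int.gcd (r + 1) ((p : ℤ) * n) * Int.gcd (r - 1) ((p : ℤ) * n) =
      2 * p * Int.gcd (k' * ((n / 2 : ℕ) : ℤ)) (n : ℤ) := by
  obtain ⟨t, ht⟩ := hr
  obtain ⟨s, hs⟩ := hne
  have h2 : (n / 2 : ℕ) = s := by omega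
  have hdvd : ((p : ℤ) * n) ∣ r ^ 2 - 1 := hrr.symm.dvd
  have hk : k' * ((p : ℤ) * n) = r ^ 2 - 1 := by
    rw [hk']; exact Int.ediv_mul_cancel hdvd
  have hn' : (n : ℤ) = 2 * s := by push_cast [hs]; ring
  have key : 2 * (t * (t + 1)) = k' * ((p : ℤ) * s) := by
    have h4 : (2 : ℤ) * (2 * (t * (t + 1))) = 2 * (k' * ((p : ℤ) * s)) := by
      rw [ht, hn'] at hk
      linear_combination -hk
    exact mul_left_cancel₀ (by norm_num) h4
  have hcop : IsCoprime (t + 1 : ℤ) t := ⟨1, -1, by ring⟩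
  have e1 : r + 1 = 2 * (t + 1) := by rw [ht]; ring
  have e2 : r - 1 = 2 * t := by rw [ht]; ring
  have e3 : ((p : ℤ) * n) = 2 * ((p : ℤ) * s) := by push_cast [hs]; ring
  rw [h2, e1, e2, e3, hn', Int.gcd_mul_left, Int.gcd_mul_left]
  have hprod : Int.gcd (t + 1) ((p : ℤ) * s) * Int.gcd t ((p : ℤ) * s)
      = Int.gcd ((t + 1) * t) ((p : ℤ) * s) := (gcd_mul_of_coprime' _ hcop).symm
  have hfactor : ∀ a b : ℕ, 2 * a * (2 * b) = 4 * (a * b) := fun a b => by ring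
  rcases Int.even_or_odd k' with ⟨j, hj⟩ | ⟨j, hj⟩
  · -- k' even, k' = j + j
    have htt : (t + 1) * t = j * ((p : ℤ) * s) := by
      have h4 : (2 : ℤ) * ((t + 1) * t) = 2 * (j * ((p : ℤ) * s)) := by
        linear_combination key + ((p : ℤ) * s) * hj
      exact mul_left_cancel₀ (by norm_num) h4
    have g1 : Int.gcd ((t + 1) * t) ((p : ℤ) * s) = p * s := by
      rw [htt, Int.gcd_eq_natAbs_right (dvd_mul_left _ _), Int.natAbs_mul]
      simp
    have g2 : Int.gcd (k' * s) (2 * s) = 2 * s := by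
      have hrw : k' * (s : ℤ) = j * (2 * s) := by rw [hj]; ring
      rw [hrw, Int.gcd_eq_natAbs_right (dvd_mul_left _ _), Int.natAbs_mul]
      simp
    rw [g2, show Int.natAbs 2 = 2 from rfl, hfactor, hprod, g1]
    ring
  · -- k' odd, k' = 2j + 1
    obtain ⟨w, hw⟩ : Even (t * (t + 1)) := Int.even_mul_succ_self t
    have h2ps : (2 : ℤ) ∣ (p : ℤ) * s := by
      have hd : (2 : ℤ) ∣ (2 * j + 1) * ((p : ℤ) * s) :=
        ⟨w + w, by linear_combination (-1 : ℤ) * key + 2 * hw - ((p : ℤ) * s) * hj⟩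
      rcases (Int.prime_two.dvd_mul).mp hd with h | h
      · omega
      · exact h
    obtain ⟨u, hu⟩ := h2ps
    have hu0 : 0 ≤ u := by
      have hps : (0 : ℤ) ≤ (p : ℤ) * s := by positivity
      omega
    have htt : (t + 1) * t = (2 * j + 1) * u := by
      have h4 : (2 : ℤ) * ((t + 1) * t) = 2 * ((2 * j + 1) * u) := by
        linear_combination key + k' * hu + 2 * u * hj
      exact mul_left_cancel₀ (by norm_num) h4
    have hcop2 : IsCoprime (2 * j + 1 : ℤ) 2 := ⟨1, -j, by ring⟩
    have g1 : Int.gcd ((t + 1) * t) ((p : ℤ) * s) = u.natAbs := by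
      rw [htt, hu, mul_comm (2 * j + 1 : ℤ) u, mul_comm (2 : ℤ) u, Int.gcd_mul_left,
        Int.isCoprime_iff_gcd_eq_one.mp hcop2, mul_one]
    have g2 : Int.gcd (k' * s) (2 * s) = s := by
      rw [hj, Int.gcd_mul_right, Int.isCoprime_iff_gcd_eq_one.mp hcop2, one_mul]
      simp
    have hups : 2 * u.natAbs = p * s := by
      have h5 : (2 : ℤ) * u.natAbs = (p : ℤ) * s := by rw [Int.natAbs_of_nonneg hu0]; omega
      exact_mod_cast h5
    rw [g2, show Int.natAbs 2 = 2 from rfl, hfactor, hprod, g1,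
      show 4 * u.natAbs = 2 * (2 * u.natAbs) from by ring, hups]
    ring
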